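/- Let β > 0 and let V_T(x) = e^{−x} + x − 1. Then for every θ > 0 the function r ↦ e^{−βV_T(r) − θr} is integrable on ℝ with ∫_ℝ e^{−βV_T(r) − θr} dr = e^{β} β^{−(β+θ)} Γ(β+θ), and the normalized expectation satisfies (∫_ℝ r e^{−βV_T(r) − θr} dr)/(∫_ℝ e^{−βV_T(r) − θr} dr) = log β − Γ′(β+θ)/Γ(β+θ). Moreover, there exists exactly one θ > 0 such that this expectation equals 0, i.e. such that Γ′(β+θ)/Γ(β+θ) = log β. -/

import Mathlib

open MeasureTheory Real Set Filter Asymptotics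
open scoped Topology

noncomputable section

/-- The Toda potential `V_T(x) = e^(-x) + x - 1`. -/
def todaV (x : ℝ) : ℝ := Real.exp (-x) + x - 1

noncomputable section

lemma deriv_Gamma_integral {s : ℝ} (hs : 0 < s) :
    IntegrableOn (fun t : ℝ => t ^ (s - 1) * (Real.log t * rexp (-t))) (Ioi 0) ∧
      HasDerivAt Real.Gamma (∫ t in Ioi (0:ℝ), t ^ (s - 1) * (Real.log t * rexp (-t))) s := by
  have hsc : (0:ℝ) < (s:ℂ).re := by simpa using hs
  have h := mellin_hasDerivAt_of_isBigO_rpow (E := ℂ) (f := fun t : ℝ => (rexp (-t) : ℂ))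
      (s := (s:ℂ)) (a := s + 1) (b := 0) ?_ ?_ (by simpa using lt_add_one s) ?_ (by simpa using hs)
  · have heq : ∀ t ∈ Ioi (0:ℝ), (t:ℂ) ^ ((s:ℂ) - 1) • (Real.log t • (rexp (-t) : ℂ)) =
        ((t ^ (s - 1) * (Real.log t * rexp (-t)) : ℝ) : ℂ) := by
      intro t ht
      rw [show ((s:ℂ) - 1) = ((s - 1 : ℝ) : ℂ) by push_cast; ring,
        ← Complex.ofReal_cpow (le_of_lt ht), Complex.real_smul, smul_eq_mul]
      push_cast
      ring
    have h1 : IntegrableOn (fun t : ℝ => ((t ^ (s - 1) * (Real.log t * rexp (-t)) : ℝ) : ℂ))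
        (Ioi 0) := by
      exact (h.1.congr_fun heq measurableSet_Ioi)
    have h1' : IntegrableOn (fun t : ℝ => t ^ (s - 1) * (Real.log t * rexp (-t))) (Ioi 0) := by
      have := h1.re
      simp only [Complex.ofReal_re, RCLike.re_to_complex] at this
      exact this
    refine ⟨h1', ?_⟩
    have hval : mellin (fun t : ℝ => (Real.log t : ℝ) • (rexp (-t) : ℂ)) (s:ℂ) =
        ((∫ t in Ioi (0:ℝ), t ^ (s - 1) * (Real.log t * rexp (-t)) : ℝ) : ℂ) := by
      rw [mellin, setIntegral_congr_fun measurableSet_Ioi heq]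
      exact integral_ofReal
    have h2 : HasDerivAt Complex.GammaIntegral
        ((∫ t in Ioi (0:ℝ), t ^ (s - 1) * (Real.log t * rexp (-t)) : ℝ) : ℂ) (s:ℂ) := by
      rw [Complex.GammaIntegral_eq_mellin, ← hval]
      exact h.2
    have h3 : HasDerivAt Complex.Gamma
        ((∫ t in Ioi (0:ℝ), t ^ (s - 1) * (Real.log t * rexp (-t)) : ℝ) : ℂ) (s:ℂ) := by
      refine h2.congr_of_eventuallyEq ?_
      filter_upwards [(isOpen_Ioi.preimage Complex.continuous_re).mem_nhds (by simpa using hs)]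
        with z hz
      exact Complex.Gamma_eq_integral hz
    have h4 := h3.real_of_complex
    simpa [Complex.Gamma_ofReal] using h4
  · exact (Continuous.continuousOn (by continuity)).locallyIntegrableOn measurableSet_Ioi
  · rw [← isBigO_norm_left]
    simp_rw [Complex.norm_real, isBigO_norm_left]
    simpa only [neg_one_mul] using (isLittleO_exp_neg_mul_rpow_atTop zero_lt_one _).isBigO
  · simp_rw [neg_zero, rpow_zero]
    refine isBigO_const_of_tendsto (?_ : Tendsto _ _ (𝓝 (1 : ℂ))) one_ne_zero
    rw [(by simp : (1 : ℂ) = Real.exp (-0))]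
    exact (Complex.continuous_ofReal.comp (Real.continuous_exp.comp continuous_neg)).continuousWithinAt


lemma expNegImage : (fun r : ℝ => rexp (-r)) '' univ = Ioi 0 := by
  rw [image_univ, show (fun r : ℝ => rexp (-r)) = rexp ∘ (fun r : ℝ => -r) from rfl,
    Set.range_comp, neg_surjective.range_eq, image_univ, Real.range_exp]

lemma expNegDeriv : ∀ x ∈ (univ : Set ℝ),
    HasDerivWithinAt (fun r : ℝ => rexp (-r)) (-rexp (-x)) univ x := by
  intro x _
  have h := (Real.hasDerivAt_exp (-x)).comp x (hasDerivAt_neg x)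
  have h' : HasDerivAt (fun r : ℝ => rexp (-r)) (-rexp (-x)) x := by
    simpa [Function.comp_def, mul_comm] using h
  exact h'.hasDerivWithinAt

lemma expNegInj : InjOn (fun r : ℝ => rexp (-r)) univ :=
  fun a _ b _ h => neg_injective (Real.exp_injective h)

lemma subst_int (g : ℝ → ℝ) :
    ∫ x in Ioi (0:ℝ), g x = ∫ r : ℝ, rexp (-r) * g (rexp (-r)) := by
  rw [← expNegImage, integral_image_eq_integral_abs_deriv_smul MeasurableSet.univ
    expNegDeriv expNegInj g]
  simp [abs_of_pos (Real.exp_pos _), Measure.restrict_univ]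

lemma subst_integrable (g : ℝ → ℝ) :
    IntegrableOn g (Ioi 0) ↔ Integrable (fun r : ℝ => rexp (-r) * g (rexp (-r))) := by
  rw [← expNegImage, integrableOn_image_iff_integrableOn_abs_deriv_smul MeasurableSet.univ
    expNegDeriv expNegInj g]
  have hfun : ∀ x : ℝ, |(-rexp (-x))| • g (rexp (-x)) = rexp (-x) * g (rexp (-x)) := by
    intro x; simp [abs_of_pos (Real.exp_pos _)]
  rw [IntegrableOn, Measure.restrict_univ]
  exact integrable_congr (Filter.Eventually.of_forall hfun)


lemma base_integrable {s b : ℝ} (hs : 0 < s) (hb : 0 < b) :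
    IntegrableOn (fun x : ℝ => x ^ (s-1) * rexp (-(b*x))) (Ioi 0) := by
  have h0 := Real.GammaIntegral_convergent hs
  have h1 : IntegrableOn (fun x : ℝ => rexp (-(b*x)) * (b*x) ^ (s-1)) (Ioi 0) := by
    have := (integrableOn_Ioi_comp_mul_left_iff (fun x : ℝ => rexp (-x) * x ^ (s-1)) 0 hb).mpr
    simpa using this (by simpa using h0)
  have h2 := (h1.const_mul (b ^ (s-1))⁻¹)
  refine IntegrableOn.congr_fun h2 (fun x hx => ?_) measurableSet_Ioi
  have hx0 : (0:ℝ) < x := hx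
  rw [mul_rpow hb.le hx0.le]
  field_simp [(rpow_pos_of_pos hb _).ne']

lemma base_integral {s b : ℝ} (hs : 0 < s) (hb : 0 < b) :
    ∫ x in Ioi (0:ℝ), x ^ (s-1) * rexp (-(b*x)) = b ^ (-s) * Real.Gamma s := by
  have h := integral_rpow_mul_exp_neg_mul_rpow one_pos (q := s - 1) (by linarith) hb
  rw [show ∫ x in Ioi (0:ℝ), x ^ (s-1) * rexp (-b * x ^ (1:ℝ)) =
      ∫ x in Ioi (0:ℝ), x ^ (s-1) * rexp (-(b*x)) from
    setIntegral_congr_fun measurableSet_Ioi (fun x hx => by rw [rpow_one]; ring_nf)] at h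
  rw [h]
  norm_num

lemma log_integrable {s b : ℝ} (hs : 0 < s) (hb : 0 < b) (hlog1 :
    IntegrableOn (fun t : ℝ => t ^ (s - 1) * (Real.log t * rexp (-t))) (Ioi 0)) :
    IntegrableOn (fun x : ℝ => Real.log x * (x ^ (s-1) * rexp (-(b*x)))) (Ioi 0) := by
  have h1 : IntegrableOn (fun x : ℝ => (b*x) ^ (s-1) * (Real.log (b*x) * rexp (-(b*x))))
      (Ioi 0) := by
    have := (integrableOn_Ioi_comp_mul_left_iff
      (fun t : ℝ => t ^ (s - 1) * (Real.log t * rexp (-t))) 0 hb).mpr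
    simpa using this (by simpa using hlog1)
  have h2 := (h1.const_mul (b ^ (s-1))⁻¹).sub ((base_integrable hs hb).const_mul (Real.log b))
  refine IntegrableOn.congr_fun h2 (fun x hx => ?_) measurableSet_Ioi
  have hx0 : (0:ℝ) < x := hx
  simp only [Pi.sub_apply]
  rw [mul_rpow hb.le hx0.le, Real.log_mul hb.ne' hx0.ne']
  field_simp [(rpow_pos_of_pos hb _).ne']
  ring

lemma log_integral {s b : ℝ} (hs : 0 < s) (hb : 0 < b)
    (hlog1 : IntegrableOn (fun t : ℝ => t ^ (s - 1) * (Real.log t * rexp (-t))) (Ioi 0))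
    (hD : deriv Real.Gamma s = ∫ t in Ioi (0:ℝ), t ^ (s - 1) * (Real.log t * rexp (-t))) :
    ∫ x in Ioi (0:ℝ), Real.log x * (x ^ (s-1) * rexp (-(b*x)))
      = b ^ (-s) * (deriv Real.Gamma s - Real.log b * Real.Gamma s) := by
  have hcomp := integral_comp_mul_left_Ioi
    (fun t : ℝ => t ^ (s - 1) * (Real.log t * rexp (-t))) 0 hb
  rw [mul_zero] at hcomp
  -- LHS of hcomp: ∫ x in Ioi 0, (b*x)^(s-1) * (log (b*x) * exp (-(b*x)))
  have hexpand : ∫ x in Ioi (0:ℝ), (b*x) ^ (s-1) * (Real.log (b*x) * rexp (-(b*x)))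
      = b ^ (s-1) * (Real.log b * (b ^ (-s) * Real.Gamma s)
        + ∫ x in Ioi (0:ℝ), Real.log x * (x ^ (s-1) * rexp (-(b*x)))) := by
    rw [← base_integral hs hb]
    rw [show ∫ x in Ioi (0:ℝ), (b*x) ^ (s-1) * (Real.log (b*x) * rexp (-(b*x)))
        = ∫ x in Ioi (0:ℝ), b ^ (s-1) * (Real.log b * (x ^ (s-1) * rexp (-(b*x)))
          + Real.log x * (x ^ (s-1) * rexp (-(b*x)))) from
      setIntegral_congr_fun measurableSet_Ioi (fun x hx => by
        have hx0 : (0:ℝ) < x := hx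
        rw [mul_rpow hb.le hx0.le, Real.log_mul hb.ne' hx0.ne']
        ring)]
    rw [integral_const_mul, integral_add (((base_integrable hs hb).const_mul (Real.log b)))
      (log_integrable hs hb hlog1), integral_const_mul]
  have hb1 : b ^ (s-1) * b ^ (-s) = b⁻¹ := by
    rw [← rpow_add hb, show s - 1 + -s = -1 by ring, rpow_neg_one]
  have hD' : (∫ t in Ioi (0:ℝ), t ^ (s - 1) * (Real.log t * rexp (-t))) = deriv Real.Gamma s :=
    hD.symm
  rw [hexpand, hD', smul_eq_mul] at hcomp
  have hne : b ^ (s-1) ≠ 0 := (rpow_pos_of_pos hb _).ne'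
  have := mul_left_cancel₀ hne (a := b ^ (s-1)) (b := ∫ x in Ioi (0:ℝ),
    Real.log x * (x ^ (s-1) * rexp (-(b*x))))
    (c := b ^ (-s) * (deriv Real.Gamma s - Real.log b * Real.Gamma s)) ?_
  · exact this
  · linear_combination hcomp - deriv Real.Gamma s * hb1


def ψ (x : ℝ) : ℝ := deriv Real.Gamma x / Real.Gamma x

lemma gamma_diff {x : ℝ} (hx : 0 < x) : DifferentiableAt ℝ Real.Gamma x :=
  Real.differentiableAt_Gamma fun m => by
    have : (0:ℝ) ≤ m := m.cast_nonneg
    intro hcon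
    rw [hcon] at hx
    linarith

lemma logGamma_hasDeriv {x : ℝ} (hx : 0 < x) :
    HasDerivAt (Real.log ∘ Real.Gamma) (ψ x) x := by
  unfold ψ
  exact (gamma_diff hx).hasDerivAt.log (Real.Gamma_pos_of_pos hx).ne'

lemma deriv_logGamma {x : ℝ} (hx : 0 < x) : deriv (Real.log ∘ Real.Gamma) x = ψ x :=
  (logGamma_hasDeriv hx).deriv

lemma psi_mono {x y : ℝ} (hx : 0 < x) (hxy : x < y) : ψ x ≤ ψ y := by
  have hc : ConvexOn ℝ (Ioi 0) (Real.log ∘ Real.Gamma) := Real.convexOn_log_Gamma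
  have hy : 0 < y := hx.trans hxy
  have h1 := hc.deriv_le_slope (mem_Ioi.mpr hx) (mem_Ioi.mpr hy) hxy
    (logGamma_hasDeriv hx).differentiableAt
  have h2 := hc.slope_le_deriv (mem_Ioi.mpr hx) (mem_Ioi.mpr hy) hxy
    (logGamma_hasDeriv hy).differentiableAt
  rw [deriv_logGamma hx] at h1
  rw [deriv_logGamma hy] at h2
  linarith

lemma logGamma_rec {x : ℝ} (hx : 0 < x) :
    (Real.log ∘ Real.Gamma) (x + 1) = (Real.log ∘ Real.Gamma) x + Real.log x := by
  simp only [Function.comp_apply, Real.Gamma_add_one hx.ne',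
    Real.log_mul hx.ne' (Real.Gamma_pos_of_pos hx).ne', add_comm]

lemma psi_rec {x : ℝ} (hx : 0 < x) : ψ (x + 1) = ψ x + 1 / x := by
  have h1 : deriv (Real.log ∘ Real.Gamma) (x + 1) = deriv (Real.log ∘ Real.Gamma) x + 1 / x := by
    rw [← deriv_comp_add_const, one_div, ← Real.deriv_log,
      ← deriv_add ((logGamma_hasDeriv hx).differentiableAt) (Real.differentiableAt_log hx.ne')]
    apply Filter.EventuallyEq.deriv_eq
    filter_upwards [eventually_gt_nhds hx] with y hy
    exact logGamma_rec hy
  rw [← deriv_logGamma (by positivity), ← deriv_logGamma hx]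
  exact h1

lemma psi_inj {a b : ℝ} (ha : 0 < a) (hb : 0 < b) (h : ψ a = ψ b) : a = b := by
  by_contra hne
  rcases lt_or_gt_of_ne hne with hab | hab
  · have h1 : ψ (a + 1) ≤ ψ (b + 1) := psi_mono (by positivity) (by linarith)
    rw [psi_rec ha, psi_rec hb, h] at h1
    have : 1 / b < 1 / a := by
      apply one_div_lt_one_div_of_lt ha hab
    linarith
  · have h1 : ψ (b + 1) ≤ ψ (a + 1) := psi_mono (by positivity) (by linarith)
    rw [psi_rec ha, psi_rec hb, h] at h1
    have : 1 / a < 1 / b := by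
      apply one_div_lt_one_div_of_lt hb hab
    linarith

lemma slope_facts {x : ℝ} (hx : 0 < x) :
    slope (Real.log ∘ Real.Gamma) x (x + 2⁻¹) + slope (Real.log ∘ Real.Gamma) (x + 2⁻¹) (x + 1)
      = 2 * Real.log x := by
  rw [slope_def_field, slope_def_field]
  have h := logGamma_rec hx
  have e1 : x + 2⁻¹ - x = (2⁻¹ : ℝ) := by ring
  have e2 : x + 1 - (x + 2⁻¹) = (2⁻¹ : ℝ) := by ring
  rw [e1, e2]
  rw [← add_div, h]
  ring

lemma psi_lt_log {x : ℝ} (hx : 0 < x) : ψ x < Real.log x ∧ Real.log x < ψ (x + 1) := by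
  have hc : ConvexOn ℝ (Ioi 0) (Real.log ∘ Real.Gamma) := Real.convexOn_log_Gamma
  set m := x + 2⁻¹ with hm
  have hm0 : 0 < m := by positivity
  have hxm : x < m := by rw [hm]; linarith
  have hm1 : m < x + 1 := by rw [hm]; linarith
  have h1 := hc.deriv_le_slope (mem_Ioi.mpr hx) (mem_Ioi.mpr hm0) hxm
    (logGamma_hasDeriv hx).differentiableAt
  have h2 := hc.slope_le_deriv (mem_Ioi.mpr hx) (mem_Ioi.mpr hm0) hxm
    (logGamma_hasDeriv hm0).differentiableAt
  have h3 := hc.deriv_le_slope (mem_Ioi.mpr hm0) (mem_Ioi.mpr (by positivity : (0:ℝ) < x + 1))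
    hm1 (logGamma_hasDeriv hm0).differentiableAt
  have h4 := hc.slope_le_deriv (mem_Ioi.mpr hm0) (mem_Ioi.mpr (by positivity : (0:ℝ) < x + 1))
    hm1 (logGamma_hasDeriv (by positivity : (0:ℝ) < x + 1)).differentiableAt
  rw [deriv_logGamma hx] at h1
  rw [deriv_logGamma hm0] at h2 h3
  rw [deriv_logGamma (by positivity : (0:ℝ) < x + 1)] at h4
  have hsum := slope_facts hx
  rw [← hm] at hsum
  have hne : x ≠ m := ne_of_lt hxm
  constructor
  · by_contra hcon
    push_neg at hcon
    -- log x ≤ ψ x ≤ slope1 ≤ ψ m ≤ slope2, slope1 + slope2 = 2 log x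
    have : ψ x = ψ m := by linarith
    exact hne (psi_inj hx hm0 this)
  · by_contra hcon
    push_neg at hcon
    have : ψ m = ψ (x + 1) := by linarith
    exact (ne_of_lt hm1) (psi_inj hm0 (by positivity) this)

lemma psi_exists_eq_log {x : ℝ} (hx : 0 < x) :
    ∃ c ∈ Ioo x (x + 1), ψ c = Real.log x := by
  obtain ⟨h1, h2⟩ := psi_lt_log hx
  have hder : ∀ y ∈ Icc x (x + 1),
      HasDerivWithinAt (Real.log ∘ Real.Gamma) (ψ y) (Icc x (x + 1)) y := by
    intro y hy
    exact (logGamma_hasDeriv (lt_of_lt_of_le hx hy.1)).hasDerivWithinAt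
  have := exists_hasDerivWithinAt_eq_of_gt_of_lt (by linarith : x ≤ x + 1) hder h1 h2
  obtain ⟨c, hc, hceq⟩ := this
  exact ⟨c, hc, hceq⟩

/-- for `β > 0` and `θ > 0`, `r ↦ e^(-β V_T(r) - θ r)` is integrable with
integral `e^β β^(-(β+θ)) Γ(β+θ)`, the normalized expectation of `r` equals
`log β - Γ'(β+θ)/Γ(β+θ)`, and there is exactly one `θ > 0` making this expectation zero. -/
theorem toda_partition_function_and_unique_theta (β : ℝ) (hβ : 0 < β) :
    (∀ θ : ℝ, 0 < θ →
      Integrable (fun r : ℝ => Real.exp (-β * todaV r - θ * r)) ∧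
      (∫ r : ℝ, Real.exp (-β * todaV r - θ * r)) =
        Real.exp β * β ^ (-(β + θ)) * Real.Gamma (β + θ) ∧
      (∫ r : ℝ, r * Real.exp (-β * todaV r - θ * r)) /
          (∫ r : ℝ, Real.exp (-β * todaV r - θ * r)) =
        Real.log β - deriv Real.Gamma (β + θ) / Real.Gamma (β + θ)) ∧
    ∃! θ : ℝ, 0 < θ ∧
      (∫ r : ℝ, r * Real.exp (-β * todaV r - θ * r)) /
          (∫ r : ℝ, Real.exp (-β * todaV r - θ * r)) = 0 := by
  have key : ∀ θ : ℝ, 0 < θ →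
      Integrable (fun r : ℝ => Real.exp (-β * todaV r - θ * r)) ∧
      (∫ r : ℝ, Real.exp (-β * todaV r - θ * r)) =
        Real.exp β * β ^ (-(β + θ)) * Real.Gamma (β + θ) ∧
      (∫ r : ℝ, r * Real.exp (-β * todaV r - θ * r)) /
          (∫ r : ℝ, Real.exp (-β * todaV r - θ * r)) =
        Real.log β - deriv Real.Gamma (β + θ) / Real.Gamma (β + θ) := by
    intro θ hθ
    have hs : 0 < β + θ := by linarith
    obtain ⟨hlog1, hDder⟩ := deriv_Gamma_integral hs
    have hD : deriv Real.Gamma (β + θ)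
        = ∫ t in Ioi (0:ℝ), t ^ (β + θ - 1) * (Real.log t * rexp (-t)) := hDder.deriv
    set g0 : ℝ → ℝ := fun x => rexp β * (x ^ (β + θ - 1) * rexp (-(β * x))) with hg0
    set g1 : ℝ → ℝ := fun x =>
      rexp β * (-Real.log x * (x ^ (β + θ - 1) * rexp (-(β * x)))) with hg1
    have hfe : (fun r : ℝ => Real.exp (-β * todaV r - θ * r))
        = fun r : ℝ => rexp (-r) * g0 (rexp (-r)) := by
      funext r
      rw [hg0]
      simp only [todaV]
      rw [← Real.exp_mul, ← Real.exp_add, ← Real.exp_add, ← Real.exp_add]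
      congr 1
      ring
    have hfe1 : (fun r : ℝ => r * Real.exp (-β * todaV r - θ * r))
        = fun r : ℝ => rexp (-r) * g1 (rexp (-r)) := by
      funext r
      rw [hg1]
      simp only [todaV, Real.log_exp]
      rw [← Real.exp_mul, neg_neg]
      rw [show rexp (-r) * (rexp β * (r * (rexp (-r * (β + θ - 1)) * rexp (-(β * rexp (-r))))))
          = r * (rexp (-r) * (rexp β * (rexp (-r * (β + θ - 1)) * rexp (-(β * rexp (-r))))))
        from by ring]
      rw [← Real.exp_add, ← Real.exp_add, ← Real.exp_add]
      congr 2
      ring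
    have hg0int : IntegrableOn g0 (Ioi 0) := by
      rw [hg0]; exact (base_integrable hs hβ).const_mul _
    have hg1int : IntegrableOn g1 (Ioi 0) := by
      have := ((log_integrable hs hβ hlog1).neg.const_mul (rexp β))
      refine IntegrableOn.congr_fun this (fun x _ => ?_) measurableSet_Ioi
      rw [hg1]; simp only [Pi.neg_apply]; ring
    have hZ : (∫ r : ℝ, Real.exp (-β * todaV r - θ * r))
        = Real.exp β * β ^ (-(β + θ)) * Real.Gamma (β + θ) := by
      rw [hfe, ← subst_int g0, hg0]
      rw [integral_const_mul, base_integral hs hβ]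
      ring
    have hN : (∫ r : ℝ, r * Real.exp (-β * todaV r - θ * r))
        = Real.exp β * (β ^ (-(β + θ)) *
          (Real.log β * Real.Gamma (β + θ) - deriv Real.Gamma (β + θ))) := by
      rw [hfe1, ← subst_int g1, hg1]
      simp only [neg_mul, integral_const_mul, integral_neg]
      rw [log_integral hs hβ hlog1 hD]
      ring
    refine ⟨?_, hZ, ?_⟩
    · rw [hfe]; exact (subst_integrable g0).mp hg0int
    · rw [hZ, hN]
      have hΓ : Real.Gamma (β + θ) ≠ 0 := (Real.Gamma_pos_of_pos hs).ne'
      have hb : (β : ℝ) ^ (-(β + θ)) ≠ 0 := (rpow_pos_of_pos hβ _).ne'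
      field_simp
  refine ⟨key, ?_⟩
  obtain ⟨c, hc, hceq⟩ := psi_exists_eq_log hβ
  have hcβ : 0 < c - β := by linarith [hc.1]
  have hcpos : 0 < c := by linarith [hc.1]
  refine ⟨c - β, ⟨hcβ, ?_⟩, ?_⟩
  · rw [(key (c - β) hcβ).2.2, show β + (c - β) = c by ring]
    have : deriv Real.Gamma c / Real.Gamma c = Real.log β := hceq
    rw [this, sub_self]
  · rintro θ' ⟨hθ', hzero⟩
    rw [(key θ' hθ').2.2] at hzero
    have h1 : ψ (β + θ') = Real.log β := by
      unfold ψ; linarith [hzero]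
    have h2 : β + θ' = c := psi_inj (by linarith) hcpos (h1.trans hceq.symm)
    linarith
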